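/- The fixed set Fix(κ₁) = {v ∈ L_z | κ₁(v) = v} is exactly the set of ℤ-linear combinations of u₁ := (−1−i, 1−i) and u₂ := (i, i); moreover h(u₁, u₁) = −4, h(u₂, u₂) = −2, and h(u₁, u₂) = 0, so that Fix(κ₁) with the restricted form is a ℤ-lattice isometric to (ℤ², diag(−4, −2)). -/

import Mathlib

/-- The imaginary unit `i` in the Gaussian integers `ℤ[i]`. -/
def gi : GaussianInt := Zsqrtd.sqrtd

/-- The underlying `ℤ[i]`-module of the Gaussian lattice `L_z`. -/
abbrev Lz : Type := GaussianInt × GaussianInt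

/-- The Hermitian form of `L_z`, given by the matrix `[[-2, 1-i], [1+i, -2]]`;
conjugate-linear in the first argument, linear in the second. -/
def hz (x y : Lz) : GaussianInt :=
  star x.1 * (-2) * y.1 + star x.1 * (1 - gi) * y.2 +
    star x.2 * (1 + gi) * y.1 + star x.2 * (-2) * y.2

/-- An isometry of `L_z`: a `ℤ[i]`-linear bijection preserving the form `hz`. -/
def IsIsomLz (A : Lz → Lz) : Prop :=
  Function.Bijective A ∧ (∀ x y : Lz, A (x + y) = A x + A y) ∧
    (∀ (c : GaussianInt) (x : Lz), A (c • x) = c • A x) ∧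
    ∀ x y : Lz, hz (A x) (A y) = hz x y

/-- An involutive anti-isometry of `L_z`: an additive bijection `ν` with
`ν (c • v) = c̄ • ν v`, `hz (ν x) (ν y) = conj (hz x y)` and `ν ∘ ν = id`. -/
def IsInvAntiIsomLz (ν : Lz → Lz) : Prop :=
  Function.Bijective ν ∧ (∀ x y : Lz, ν (x + y) = ν x + ν y) ∧
    (∀ (c : GaussianInt) (x : Lz), ν (c • x) = star c • ν x) ∧
    (∀ x y : Lz, hz (ν x) (ν y) = star (hz x y)) ∧
    ∀ x : Lz, ν (ν x) = x

/-- The anti-isometry `κ₁ : (x₁, x₂) ↦ (−x̄₂, −x̄₁)` of `L_z`. -/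
def kappa1 (x : Lz) : Lz := (-(star x.2), -(star x.1))

/-- The anti-isometry `κ₃ : (x₁, x₂) ↦ (i·x̄₁, −x̄₂)` of `L_z`. -/
def kappa3 (x : Lz) : Lz := (gi * star x.1, -(star x.2))

lemma two_re' : (2 : GaussianInt).re = 2 := by decide
lemma two_im' : (2 : GaussianInt).im = 0 := by decide

set_option maxHeartbeats 1000000 in
/-- The fixed set `Fix(κ₁)` of `κ₁` in `L_z` is exactly the set of
`ℤ`-linear combinations of `u₁ = (−1−i, 1−i)` and `u₂ = (i, i)`; moreover
`h(u₁,u₁) = −4`, `h(u₂,u₂) = −2`, `h(u₁,u₂) = 0`, so that `(m, n) ↦ m•u₁ + n•u₂` is an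
isometry of `(ℤ², diag(−4,−2))` onto `Fix(κ₁)` with the restricted form. -/
theorem stmt10 :
    letI u₁ : Lz := (-1 - gi, 1 - gi)
    letI u₂ : Lz := (gi, gi)
    {v : Lz | kappa1 v = v} = {v : Lz | ∃ m n : ℤ, v = m • u₁ + n • u₂} ∧
    hz u₁ u₁ = -4 ∧ hz u₂ u₂ = -2 ∧ hz u₁ u₂ = 0 ∧
    Function.Injective (fun p : ℤ × ℤ => p.1 • u₁ + p.2 • u₂) ∧
    ∀ m n m' n' : ℤ, hz (m • u₁ + n • u₂) (m' • u₁ + n' • u₂)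
      = ((-4 * (m * m') + -2 * (n * n') : ℤ) : GaussianInt) := by
  refine ⟨?_, ?_, ?_, ?_, ?_, ?_⟩
  · ext v
    simp only [Set.mem_setOf_eq]
    constructor
    · intro hv
      have h1 : -(star v.2) = v.1 := congrArg Prod.fst hv
      refine ⟨v.2.re, v.2.re + v.2.im, ?_⟩
      have hre : v.1.re = -v.2.re := by rw [← h1]; simp
      have him : v.1.im = v.2.im := by rw [← h1]; simp
      refine Prod.ext ?_ ?_ <;>
        simp only [Prod.smul_fst, Prod.smul_snd, Prod.fst_add, Prod.snd_add,
          zsmul_eq_mul, Prod.fst_mul, Prod.snd_mul, Prod.fst_intCast, Prod.snd_intCast, two_re', two_im', Prod.fst_add, Prod.snd_add, Prod.fst_mul, Prod.snd_mul, Prod.fst_intCast, Prod.snd_intCast, Zsqrtd.ext_iff, Zsqrtd.re_mul, Zsqrtd.im_mul,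
          Zsqrtd.re_add, Zsqrtd.im_add, Zsqrtd.re_sub, Zsqrtd.im_sub,
          Zsqrtd.re_neg, Zsqrtd.im_neg, Zsqrtd.re_intCast, Zsqrtd.im_intCast,
          Zsqrtd.re_one, Zsqrtd.im_one, gi, Zsqrtd.re_sqrtd, Zsqrtd.im_sqrtd,
          hre, him] <;> constructor <;> ring
    · rintro ⟨m, n, rfl⟩
      simp only [kappa1, Prod.smul_fst, Prod.smul_snd, Prod.fst_add, Prod.snd_add,
        zsmul_eq_mul, Prod.fst_mul, Prod.snd_mul, Prod.fst_intCast, Prod.snd_intCast]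
      refine Prod.ext ?_ ?_ <;>
        simp only [two_re', two_im', Prod.fst_add, Prod.snd_add, Prod.fst_mul, Prod.snd_mul, Prod.fst_intCast, Prod.snd_intCast, Zsqrtd.ext_iff, Zsqrtd.re_mul, Zsqrtd.im_mul, Zsqrtd.re_add,
          Zsqrtd.im_add, Zsqrtd.re_sub, Zsqrtd.im_sub, Zsqrtd.re_neg, Zsqrtd.im_neg,
          Zsqrtd.re_intCast, Zsqrtd.im_intCast, Zsqrtd.re_one, Zsqrtd.im_one, gi,
          Zsqrtd.re_sqrtd, Zsqrtd.im_sqrtd, Zsqrtd.re_star, Zsqrtd.im_star] <;>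
        constructor <;> ring
  · decide
  · decide
  · decide
  · intro p q hpq
    have h1 := congrArg (fun z : Lz => z.1.re) hpq
    have h2 := congrArg (fun z : Lz => z.1.im) hpq
    simp only [Prod.smul_fst, Prod.fst_add, zsmul_eq_mul, Prod.fst_mul, Prod.snd_mul, Prod.fst_intCast, Prod.snd_intCast, Zsqrtd.re_mul,
      Zsqrtd.im_mul, Zsqrtd.re_add, Zsqrtd.im_add, Zsqrtd.re_sub, Zsqrtd.im_sub,
      Zsqrtd.re_neg, Zsqrtd.im_neg, Zsqrtd.re_intCast, Zsqrtd.im_intCast,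
      Zsqrtd.re_one, Zsqrtd.im_one, gi, Zsqrtd.re_sqrtd, Zsqrtd.im_sqrtd] at h1 h2
    have hp1 : p.1 = q.1 := by omega
    have hp2 : p.2 = q.2 := by omega
    exact Prod.ext hp1 hp2
  · intro m n m' n'
    simp only [hz, Prod.smul_fst, Prod.smul_snd, Prod.fst_add, Prod.snd_add,
      zsmul_eq_mul, Prod.fst_mul, Prod.snd_mul, Prod.fst_intCast, Prod.snd_intCast]
    refine Zsqrtd.ext_iff.mpr ⟨?_, ?_⟩ <;>
      simp only [two_re', two_im', Prod.fst_add, Prod.snd_add, Prod.fst_mul, Prod.snd_mul, Prod.fst_intCast, Prod.snd_intCast, Zsqrtd.re_mul, Zsqrtd.im_mul, Zsqrtd.re_add, Zsqrtd.im_add,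
        Zsqrtd.re_sub, Zsqrtd.im_sub, Zsqrtd.re_neg, Zsqrtd.im_neg,
        Zsqrtd.re_intCast, Zsqrtd.im_intCast, Zsqrtd.re_one, Zsqrtd.im_one, gi,
        Zsqrtd.re_sqrtd, Zsqrtd.im_sqrtd, Zsqrtd.re_star, Zsqrtd.im_star] <;> ring
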